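/- For |q|<1, the sum over n≥1 of q^{2n²-n}/(-q;q)_{2n} equals the sum over all integers n of sgn(n)·q^{n(3n-1)/2}, where sgn(0)=0. -/

import Mathlib

open scoped BigOperators

/-- The finite q-Pochhammer symbol `(a;q)_n = ∏_{j=0}^{n-1} (1 - a q^j)`. -/
noncomputable def qPoch (a q : ℂ) (n : ℕ) : ℂ := ∏ j ∈ Finset.range n, (1 - a * q ^ j)

/-- triangular numbers -/
def tri : ℕ → ℕ
  | 0 => 0
  | k+1 => tri k + (k+1)

/-- second pentagonal exponents: pe n = n(3n+1)/2 -/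
def pe : ℕ → ℕ
  | 0 => 0
  | c+1 => pe c + (3*c+2)

lemma two_mul_tri (k : ℕ) : 2 * tri k = k * (k+1) := by
  induction k with
  | zero => rfl
  | succ k ih => rw [tri, Nat.mul_add, ih]; ring

lemma two_mul_pe (c : ℕ) : 2 * pe c = c * (3*c+1) := by
  induction c with
  | zero => rfl
  | succ c ih => rw [pe, Nat.mul_add, ih]; ring

lemma tri_exp (n : ℕ) : 2 * (n + 1) ^ 2 - (n + 1) = tri (2*n+1) := by
  have h2 := two_mul_tri (2*n+1)
  have h3 : tri (2*n+1) + (n+1) = 2*(n+1)^2 := by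
    have : 2 * (tri (2*n+1) + (n+1)) = 2 * (2*(n+1)^2) := by
      rw [Nat.mul_add, h2]; ring
    exact Nat.eq_of_mul_eq_mul_left (by norm_num) this
  omega

noncomputable def Pq (q : ℂ) (c k : ℕ) : ℂ := qPoch (-q^(c+1)) q k
noncomputable def tauq (q : ℂ) (c k : ℕ) : ℂ := q^(tri k + 2*c*k) / Pq q c k
noncomputable def Vq (q : ℂ) (c : ℕ) : ℂ := ∑' k : ℕ, (-1)^k * tauq q c (k+1)
noncomputable def Mq (q : ℂ) (k : ℕ) : ℝ := ‖q‖^(tri k) / (1-‖q‖)^(k+1)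

section basic
variable (q : ℂ)

lemma Pq_zero (c : ℕ) : Pq q c 0 = 1 := by simp [Pq, qPoch]

lemma Pq_succ (c k : ℕ) : Pq q c (k+1) = Pq q c k * (1 + q^(c+1+k)) := by
  rw [Pq, Pq, qPoch, qPoch, Finset.prod_range_succ, pow_add]
  ring

lemma Pq_shift (c k : ℕ) : Pq q c (k+1) = (1 + q^(c+1)) * Pq q (c+1) k := by
  rw [Pq, qPoch, Finset.prod_range_succ', pow_zero, mul_one, mul_comm]
  congr 1
  · ring
  · rw [Pq, qPoch]
    apply Finset.prod_congr rfl
    intro j _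
    ring

variable {q} (hq : ‖q‖ < 1)
include hq

lemma one_add_pow_norm (m : ℕ) (hm : 1 ≤ m) : 1 - ‖q‖ ≤ ‖1 + q^m‖ := by
  have h1 : ‖q^m‖ ≤ ‖q‖ := by
    rw [norm_pow]
    calc ‖q‖^m ≤ ‖q‖^1 := by
          apply pow_le_pow_of_le_one (norm_nonneg _) hq.le hm
      _ = ‖q‖ := pow_one _
  have h2 := norm_add_le (1 + q^m) (-(q^m))
  simp only [add_neg_cancel_right, norm_neg, norm_one] at h2
  linarith

lemma one_add_pow_ne (m : ℕ) (hm : 1 ≤ m) : (1 + q^m) ≠ 0 := by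
  intro h
  have := one_add_pow_norm hq m hm
  rw [h, norm_zero] at this
  linarith

lemma Pq_norm (c k : ℕ) : (1-‖q‖)^k ≤ ‖Pq q c k‖ := by
  induction k with
  | zero => simp [Pq_zero]
  | succ k ih =>
      rw [Pq_succ, norm_mul, pow_succ]
      have h1 := one_add_pow_norm hq (c+1+k) (by omega)
      have h0 : (0:ℝ) ≤ 1 - ‖q‖ := by linarith
      exact mul_le_mul ih h1 h0 (norm_nonneg _)

lemma Pq_ne (c k : ℕ) : Pq q c k ≠ 0 := by
  intro h
  have := Pq_norm hq c k
  rw [h, norm_zero] at this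
  have h0 : (0:ℝ) < 1 - ‖q‖ := by linarith
  have := pow_pos h0 k
  linarith

lemma norm_term_le (d e m k : ℕ) (he : tri (k+1) ≤ e) (hm : m ≤ k+1) :
    ‖q^e / Pq q d m‖ ≤ Mq q k := by
  have h0 : (0:ℝ) < 1 - ‖q‖ := by linarith
  rw [norm_div, norm_pow, Mq]
  apply div_le_div₀ (by positivity)
  · calc ‖q‖^e ≤ ‖q‖^(tri (k+1)) := pow_le_pow_of_le_one (norm_nonneg _) hq.le he
      _ ≤ ‖q‖^(tri k) := pow_le_pow_of_le_one (norm_nonneg _) hq.le (by rw [tri]; omega)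
  · positivity
  · have hn := norm_nonneg q
    calc (1-‖q‖)^(k+1) ≤ (1-‖q‖)^m := pow_le_pow_of_le_one h0.le (by linarith) hm
      _ ≤ ‖Pq q d m‖ := Pq_norm hq d m

lemma summable_Mq : Summable (Mq q) := by
  have h0 : (0:ℝ) < 1 - ‖q‖ := by linarith
  apply summable_of_ratio_norm_eventually_le (r := 1/2) (by norm_num)
  have htend : Filter.Tendsto (fun k : ℕ => ‖q‖^(k+1) / (1-‖q‖)) Filter.atTop (nhds 0) := by
    have := (tendsto_pow_atTop_nhds_zero_of_lt_one (norm_nonneg q) hq).div_const (1-‖q‖)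
    rw [zero_div] at this
    exact this.comp (Filter.tendsto_add_atTop_nat 1)
  have hev : ∀ᶠ k : ℕ in Filter.atTop, ‖q‖^(k+1) / (1-‖q‖) ≤ 1/2 := by
    filter_upwards [htend.eventually_le_const (by norm_num : (0:ℝ) < 1/2)] with k hk
    exact hk
  filter_upwards [hev] with k hk
  have hM : Mq q (k+1) = Mq q k * (‖q‖^(k+1) / (1-‖q‖)) := by
    rw [Mq, Mq, tri, pow_add]
    field_simp
    ring
  have hMnn : (0:ℝ) ≤ Mq q k := by rw [Mq]; positivity
  rw [Real.norm_of_nonneg (by rw [hM]; positivity), Real.norm_of_nonneg hMnn, hM]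
  calc Mq q k * (‖q‖^(k+1) / (1-‖q‖)) ≤ Mq q k * (1/2) := by
        apply mul_le_mul_of_nonneg_left hk hMnn
    _ = 1/2 * Mq q k := by ring

end basic
lemma key_split (t u a x P : ℂ) (hP : P ≠ 0) (hx : 1 + x ≠ 0) (h : a * u = t * x) :
    t / (P * (1+x)) = t / P - a * (u / (P * (1+x))) := by
  have h1 : t / P = t * (1+x) / (P * (1+x)) := by
    rw [mul_div_mul_right _ _ hx]
  rw [h1, ← mul_div_assoc, ← sub_div]
  congr 1
  linear_combination h

section part2
variable {q : ℂ} (hq : ‖q‖ < 1)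
include hq

lemma summable_bound {g : ℕ → ℂ} (h : ∀ k, ‖g k‖ ≤ Mq q k) : Summable g :=
  Summable.of_norm_bounded (summable_Mq hq) h

lemma summable_sign_term (d : ℕ) (e m : ℕ → ℕ) (he : ∀ k, tri (k+1) ≤ e k)
    (hm : ∀ k, m k ≤ k+1) :
    Summable (fun k => (-1)^k * (q^(e k) / Pq q d (m k))) := by
  apply summable_bound hq
  intro k
  rw [norm_mul, norm_pow, norm_neg, norm_one, one_pow, one_mul]
  exact norm_term_le hq d (e k) (m k) k (he k) (hm k)

lemma summable_V (c : ℕ) : Summable (fun k : ℕ => (-1)^k * tauq q c (k+1)) := by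
  simp only [tauq]
  exact summable_sign_term hq c _ _ (fun k => by omega) (fun k => le_refl _)

lemma norm_V_le (c : ℕ) : ‖Vq q c‖ ≤ ∑' k, Mq q k := by
  rw [Vq]
  apply le_trans (norm_tsum_le_tsum_norm ((summable_V hq c).norm))
  apply Summable.tsum_le_tsum _ ((summable_V hq c).norm) (summable_Mq hq)
  intro k
  rw [norm_mul, norm_pow, norm_neg, norm_one, one_pow, one_mul, tauq]
  exact norm_term_le hq c _ _ k (by omega) (le_refl _)

lemma Vrec (c : ℕ) :
    Vq q c = q^(2*c+1) - q^(3*c+2) + q^(3*c+2) * Vq q (c+1) := by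
  have h1 : (1 + q^(c+1)) ≠ 0 := one_add_pow_ne hq (c+1) (by omega)
  have hPne : ∀ d k, Pq q d k ≠ 0 := Pq_ne hq
  apply mul_left_cancel₀ h1
  set W : ℕ → ℂ := fun k => (-1)^k * (q^(tri (k+1) + 2*c*(k+1)) / Pq q (c+1) k) with hW
  set U : ℕ → ℂ := fun j => (-1)^j * (q^(tri (j+1) + (2*c+1)*(j+1)) / Pq q (c+1) (j+1)) with hU
  set X : ℕ → ℂ := fun j => (-1)^j * (q^(tri (j+1) + (2*c+1)*(j+1)) / Pq q (c+1) j) with hX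
  have sW : Summable W := summable_sign_term hq _ _ _ (fun k => by omega) (fun k => by omega)
  have sU : Summable U := summable_sign_term hq _ _ _ (fun k => by omega) (fun k => le_refl _)
  have sX : Summable X := summable_sign_term hq _ _ _ (fun k => by omega) (fun k => by omega)
  have sV' : Summable (fun j : ℕ => (-1)^j * tauq q (c+1) (j+1)) := summable_V hq (c+1)
  -- Step 1
  have step1 : (1 + q^(c+1)) * Vq q c = ∑' k, W k := by
    rw [Vq, ← tsum_mul_left]
    congr 1; funext k
    rw [tauq, Pq_shift, hW]
    field_simp [h1, hPne (c+1) k]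
  -- Step 2
  have step2 : ∑' k, W k = q^(2*c+1) - q^(2*c+1) * ∑' j, U j := by
    rw [Summable.tsum_eq_zero_add sW]
    have hW0 : W 0 = q^(2*c+1) := by
      simp only [hW, pow_zero, one_mul, Pq_zero, div_one]
      congr 1
      simp [tri]
      omega
    have hWs : ∀ j : ℕ, W (j+1) = -(q^(2*c+1) * U j) := by
      intro j
      simp only [hW, hU]
      have hexp : tri (j+1+1) + 2*c*(j+1+1) = (2*c+1) + (tri (j+1) + (2*c+1)*(j+1)) := by
        rw [tri]; ring
      rw [hexp, pow_add, pow_succ]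
      ring
    rw [hW0, tsum_congr hWs, tsum_neg, tsum_mul_left]
    ring
  -- Step 3
  have step3 : ∑' j, U j = (∑' j, X j) - q^(c+1) * Vq q (c+1) := by
    rw [Vq, ← tsum_mul_left, ← Summable.tsum_sub sX (Summable.mul_left _ sV')]
    congr 1; funext j
    simp only [hU, hX, tauq]
    rw [Pq_succ q (c+1) j]
    have hx : (1 + q^(c+1+1+j)) ≠ 0 := one_add_pow_ne hq _ (by omega)
    have hpow : q^(c+1) * q^(tri (j+1) + 2*(c+1)*(j+1))
        = q^(tri (j+1) + (2*c+1)*(j+1)) * q^(c+1+1+j) := by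
      rw [← pow_add, ← pow_add]; congr 1; ring
    rw [key_split (q^(tri (j+1) + (2*c+1)*(j+1))) (q^(tri (j+1) + 2*(c+1)*(j+1))) (q^(c+1))
      (q^(c+1+1+j)) (Pq q (c+1) j) (hPne (c+1) j) hx hpow]
    ring
  -- Step 4
  have step4 : ∑' j, X j = q^(2*c+2) - q^(2*c+2) * Vq q (c+1) := by
    rw [Summable.tsum_eq_zero_add sX]
    have hX0 : X 0 = q^(2*c+2) := by
      simp only [hX, pow_zero, one_mul, Pq_zero, div_one]
      congr 1
      simp [tri]
      omega
    have hXs : ∀ i : ℕ, X (i+1) = -(q^(2*c+2) * ((-1)^i * tauq q (c+1) (i+1))) := by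
      intro i
      simp only [hX, tauq]
      have hexp : tri (i+1+1) + (2*c+1)*(i+1+1)
          = (2*c+2) + (tri (i+1) + 2*(c+1)*(i+1)) := by
        rw [tri]; ring
      rw [hexp, pow_add, pow_succ]
      ring
    rw [hX0, tsum_congr hXs, tsum_neg, tsum_mul_left, Vq]
    ring
  rw [step1, step2, step3, step4]
  ring
end part2
section part3
variable {q : ℂ} (hq : ‖q‖ < 1)
include hq

omit hq in
lemma pe_ge (n : ℕ) : n ≤ pe n := by
  induction n with
  | zero => simp [pe]
  | succ n ih => rw [pe]; omega

lemma iterV (N : ℕ) :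
    Vq q 0 = (∑ n ∈ Finset.range N, (q^(pe n + (2*n+1)) - q^(pe (n+1)))) + q^(pe N) * Vq q N := by
  induction N with
  | zero => simp [pe]
  | succ N ih =>
      rw [Finset.sum_range_succ, ih, Vrec hq N, pe]
      simp only [pow_add]
      ring

lemma tendsto_tail : Filter.Tendsto (fun N => q^(pe N) * Vq q N) Filter.atTop (nhds 0) := by
  have hB : ∀ N, ‖q^(pe N) * Vq q N‖ ≤ ‖q‖^N * ∑' k, Mq q k := by
    intro N
    rw [norm_mul, norm_pow]
    apply mul_le_mul _ (norm_V_le hq N) (norm_nonneg _) (by positivity)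
    exact pow_le_pow_of_le_one (norm_nonneg _) hq.le (pe_ge N)
  have h0 : Filter.Tendsto (fun N : ℕ => ‖q‖^N * ∑' k, Mq q k) Filter.atTop (nhds 0) := by
    have := (tendsto_pow_atTop_nhds_zero_of_lt_one (norm_nonneg q) hq).mul_const (∑' k, Mq q k)
    simpa using this
  exact squeeze_zero_norm hB h0

lemma summable_pent : Summable (fun n : ℕ => q^(pe n + (2*n+1)) - q^(pe (n+1))) := by
  apply Summable.of_norm_bounded (g := fun n => 2 * ‖q‖^n)
    (Summable.mul_left _ (summable_geometric_of_lt_one (norm_nonneg q) hq))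
  intro n
  apply le_trans (norm_sub_le _ _)
  have b1 : ‖q^(pe n + (2*n+1))‖ ≤ ‖q‖^n := by
    rw [norm_pow]
    exact pow_le_pow_of_le_one (norm_nonneg _) hq.le (by have := pe_ge n; omega)
  have b2 : ‖q^(pe (n+1))‖ ≤ ‖q‖^n := by
    rw [norm_pow]
    exact pow_le_pow_of_le_one (norm_nonneg _) hq.le (by have := pe_ge (n+1); omega)
  linarith

lemma V0_eq : Vq q 0 = ∑' n : ℕ, (q^(pe n + (2*n+1)) - q^(pe (n+1))) := by
  have h1 := (summable_pent hq).hasSum.tendsto_sum_nat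
  have h2 : Filter.Tendsto
      (fun N => ∑ n ∈ Finset.range N, (q^(pe n + (2*n+1)) - q^(pe (n+1))))
      Filter.atTop (nhds (Vq q 0)) := by
    have h3 : (fun N => ∑ n ∈ Finset.range N, (q^(pe n + (2*n+1)) - q^(pe (n+1))))
        = fun N => Vq q 0 - q^(pe N) * Vq q N := by
      funext N
      rw [iterV hq N]; ring
    rw [h3]
    simpa using (tendsto_const_nhds (x := Vq q 0)).sub (tendsto_tail hq)
  exact (tendsto_nhds_unique h1 h2).symm

lemma lhs_eq :
    ∑' n : ℕ, q ^ (2 * (n + 1) ^ 2 - (n + 1)) / qPoch (-q) q (2 * (n + 1)) = Vq q 0 := by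
  set g : ℕ → ℂ := fun k => (-1)^k * tauq q 0 (k+1) with hg
  have sg : Summable g := summable_V hq 0
  have se : Summable (fun n => g (2*n)) :=
    sg.comp_injective (fun a b h => by
      have h' : 2*a = 2*b := h
      omega)
  have so : Summable (fun n => g (2*n+1)) :=
    sg.comp_injective (fun a b h => by
      have h' : 2*a+1 = 2*b+1 := h
      omega)
  have heo := tsum_even_add_odd se so
  have hterm : ∀ n : ℕ, q ^ (2 * (n + 1) ^ 2 - (n + 1)) / qPoch (-q) q (2 * (n + 1))
      = g (2*n) + g (2*n+1) := by
    intro n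
    have h24 : 2*(n+1) = (2*n+1)+1 := by omega
    have hQ : qPoch (-q) q ((2*n+1)+1) = Pq q 0 ((2*n+1)+1) := by
      rw [Pq]; norm_num
    have hsign : ((-1 : ℂ))^(2*n) = 1 := by rw [pow_mul]; norm_num
    have hsign2 : ((-1 : ℂ))^(2*n+1) = -1 := by rw [pow_succ, hsign]; norm_num
    rw [tri_exp n, h24, hQ, hg]
    simp only [hsign, hsign2, one_mul, tauq, Nat.mul_zero, Nat.zero_mul, Nat.add_zero]
    rw [Pq_succ q 0 (2*n+1)]
    have hx : (1 + q^(0+1+(2*n+1))) ≠ 0 := one_add_pow_ne hq _ (by omega)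
    have hpow : (1:ℂ) * q^(tri (2*n+1) + ((2*n+1)+1)) = q^(tri (2*n+1)) * q^(0+1+(2*n+1)) := by
      rw [one_mul, pow_add]
      congr 2
      omega
    rw [key_split (q^(tri (2*n+1))) (q^(tri (2*n+1) + ((2*n+1)+1))) 1 (q^(0+1+(2*n+1)))
      (Pq q 0 (2*n+1)) (Pq_ne hq 0 (2*n+1)) hx hpow]
    have htri : tri ((2*n+1)+1) = tri (2*n+1) + ((2*n+1)+1) := rfl
    rw [htri]
    ring
  rw [tsum_congr hterm, Summable.tsum_add se so, heo, Vq]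

lemma rhs_eq :
    ∑' m : ℤ, ((m.sign : ℂ) * q ^ (m * (3 * m - 1) / 2))
      = ∑' n : ℕ, (q^(pe n + (2*n+1)) - q^(pe (n+1))) := by
  set f : ℤ → ℂ := fun m => (m.sign : ℂ) * q ^ (m * (3 * m - 1) / 2) with hf
  have hfpos : ∀ n : ℕ, f ((n+1 : ℕ) : ℤ) = q^(pe n + (2*n+1)) := by
    intro n
    have h4 : (2:ℤ) * ((pe n : ℕ) : ℤ) = (n:ℤ) * (3*(n:ℤ)+1) := by exact_mod_cast two_mul_pe n
    have h2 : ((n+1 : ℕ) : ℤ) * (3 * ((n+1:ℕ):ℤ) - 1) = 2 * ((pe n + (2*n+1) : ℕ) : ℤ) := by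
      push_cast
      linear_combination -h4
    have h3 : ((n+1 : ℕ) : ℤ) * (3 * ((n+1:ℕ):ℤ) - 1) / 2 = ((pe n + (2*n+1) : ℕ) : ℤ) := by
      rw [h2]
      exact Int.mul_ediv_cancel_left _ (by norm_num)
    have hs : ((n+1 : ℕ) : ℤ).sign = 1 := Int.sign_natCast_of_ne_zero (Nat.succ_ne_zero n)
    rw [hf]
    simp only [h3, zpow_natCast, hs]
    norm_num
  have hfneg : ∀ n : ℕ, f (-((n:ℤ)+1)) = -(q^(pe (n+1))) := by
    intro n
    have h4 : (2:ℤ) * ((pe (n+1) : ℕ) : ℤ) = ((n:ℤ)+1) * (3*((n:ℤ)+1)+1) := by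
      exact_mod_cast two_mul_pe (n+1)
    have h2 : (-((n:ℤ)+1)) * (3 * (-((n:ℤ)+1)) - 1) = 2 * ((pe (n+1) : ℕ) : ℤ) := by
      linear_combination -h4
    have h3 : (-((n:ℤ)+1)) * (3 * (-((n:ℤ)+1)) - 1) / 2 = ((pe (n+1) : ℕ) : ℤ) := by
      rw [h2]
      exact Int.mul_ediv_cancel_left _ (by norm_num)
    have hs : (-((n:ℤ)+1)).sign = -1 := by
      rw [Int.sign_neg, Int.sign_natCast_add_one]
    rw [hf]
    simp only [h3, zpow_natCast, hs]
    norm_num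
  have s1 : Summable (fun n : ℕ => f (n : ℤ)) := by
    apply Summable.of_norm_bounded (g := fun n => ‖q‖^n)
      (summable_geometric_of_lt_one (norm_nonneg q) hq)
    intro n
    cases n with
    | zero => simp [hf]
    | succ n =>
        rw [hfpos n, norm_pow]
        exact pow_le_pow_of_le_one (norm_nonneg _) hq.le (by have := pe_ge n; omega)
  have s2 : Summable (fun n : ℕ => f (-((n:ℤ)+1))) := by
    apply Summable.of_norm_bounded (g := fun n => ‖q‖^n)
      (summable_geometric_of_lt_one (norm_nonneg q) hq)
    intro n
    rw [hfneg n, norm_neg, norm_pow]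
    exact pow_le_pow_of_le_one (norm_nonneg _) hq.le (by have := pe_ge (n+1); omega)
  have sa : Summable (fun n : ℕ => q^(pe n + (2*n+1))) := by
    apply Summable.of_norm_bounded (g := fun n => ‖q‖^n)
      (summable_geometric_of_lt_one (norm_nonneg q) hq)
    intro n
    rw [norm_pow]
    exact pow_le_pow_of_le_one (norm_nonneg _) hq.le (by have := pe_ge n; omega)
  have sb : Summable (fun n : ℕ => q^(pe (n+1))) := by
    apply Summable.of_norm_bounded (g := fun n => ‖q‖^n)
      (summable_geometric_of_lt_one (norm_nonneg q) hq)
    intro n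
    rw [norm_pow]
    exact pow_le_pow_of_le_one (norm_nonneg _) hq.le (by have := pe_ge (n+1); omega)
  rw [tsum_of_nat_of_neg_add_one s1 s2]
  rw [Summable.tsum_eq_zero_add s1]
  have hf0 : f ((0:ℕ) : ℤ) = 0 := by simp [hf]
  rw [hf0, zero_add]
  rw [tsum_congr hfpos, tsum_congr hfneg, tsum_neg]
  exact (Summable.tsum_sub sa sb).symm
end part3

/-- For |q|<1, `∑_{n≥1} q^{2n²-n}/(-q;q)_{2n} = ∑_{n∈ℤ} sgn(n) q^{n(3n-1)/2}`. -/
theorem stmt_1 (q : ℂ) (hq : ‖q‖ < 1) :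
    ∑' n : ℕ, q ^ (2 * (n + 1) ^ 2 - (n + 1)) / qPoch (-q) q (2 * (n + 1))
      = ∑' m : ℤ, (m.sign : ℂ) * q ^ (m * (3 * m - 1) / 2) := by
  rw [lhs_eq hq, V0_eq hq, rhs_eq hq]
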